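/- (Lemma 3.1: L∞ stability and TVD property of the TVD3 scheme.) Let γ ≥ √3/3, θ₃ = (3γ-1)/(6γ²), 0 ≤ θ₄ < (3γ-1)(3γ²+1)/(18γ³), μ ≥ 0, and 0 ≤ λ ≤ (18γ³θ₄ - (3γ-1)(3γ²+1)) / ((3γ-1)((6γ²+1)θ₄ - (3γ²+1))). Suppose the periodic grid functions wⁿ, w⁽²⁾, w⁽³⁾ and w^{n+1} satisfy, for every index j: (i) w⁽²⁾_j + a₂₂ μ Δ_j w⁽²⁾ = wⁿ_j - λ ã₂₁ Δ_j wⁿ; (ii) w⁽³⁾_j + (1-θ₃) c₃ μ Δ_j w⁽³⁾ = wⁿ_j - λ[(1-θ₃) c₃ Δ_j wⁿ + θ₃ (ã₃₁ Δ_j wⁿ + ã₃₂ Δ_j w⁽²⁾)] - μ θ₃ (a₃₂ Δ_j w⁽²⁾ + a₃₃ Δ_j w⁽³⁾); (iii) w^{n+1}_j + (1-θ₄) μ Δ_j w^{n+1} = wⁿ_j - θ₄ (λ + μ)(b₂ Δ_j w⁽²⁾ + b₃ Δ_j w⁽³⁾) - (1-θ₄) λ Δ_j wⁿ, where the γ-family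 coefficients are used. Then the scheme is L∞ stable and total variation diminishing: ‖w^{n+1}‖∞ ≤ ‖wⁿ‖∞ and TV(w^{n+1}) ≤ TV(wⁿ). -/

import Mathlib

open Finset Filter

set_option maxHeartbeats 1000000

lemma tvd3_master {N : ℕ} (F : (ZMod N → ℝ) → ℝ)
    (Fadd : ∀ a b : ZMod N → ℝ, F (fun j => a j + b j) ≤ F a + F b)
    (Fsmul : ∀ (c : ℝ) (v : ZMod N → ℝ), F (fun j => c * v j) = |c| * F v)
    (Fshift : ∀ v : ZMod N → ℝ, F (fun j => v (j - 1)) = F v)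
    (b2 b3 b4 s x cn c2 A0 A2 d3 : ℝ)
    (hb2 : 0 ≤ b2) (hb3 : 0 ≤ b3) (hb4 : 0 ≤ b4)
    (hs0 : 0 ≤ s) (hs1 : s ≤ 1) (hx0 : 0 ≤ x)
    (hcn0 : 0 ≤ cn) (hcnA : cn ≤ A0)
    (hc20 : 0 ≤ c2) (hc2A : c2 ≤ A2) (hd3 : 0 ≤ d3)
    (hbud : A0 + A2 + d3 ≤ 1)
    (hkey : 0 ≤ c2 + 2 * d3 * x * (1 - x))
    (wn w2 w3 wnext : ZMod N → ℝ)
    (E2 : ∀ j, w2 j + b2 * (w2 j - w2 (j - 1)) = wn j - s * (wn j - wn (j - 1)))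
    (E3 : ∀ j, w3 j + b3 * (w3 j - w3 (j - 1)) = w2 j - x * (w2 j - w2 (j - 1)))
    (E4 : ∀ j, wnext j + b4 * (wnext j - wnext (j - 1)) =
      (A0 - cn) * wn j + cn * wn (j - 1) + (A2 - c2) * w2 j + c2 * w2 (j - 1)
        + d3 * (w3 j - x * (w3 j - w3 (j - 1)))) :
    F wnext ≤ F wn := by
  have h1b : (0:ℝ) < 1 + b3 := by linarith
  obtain ⟨rr, hrr⟩ : ∃ r : ℝ, r = b3 / (1 + b3) := ⟨_, rfl⟩
  obtain ⟨dd, hdd⟩ : ∃ d : ℝ, d = 1 / (1 + b3) := ⟨_, rfl⟩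
  have hr0 : 0 ≤ rr := by rw [hrr]; positivity
  have hr1 : rr < 1 := by rw [hrr, div_lt_one h1b]; linarith
  have hd0 : 0 < dd := by rw [hdd]; positivity
  have hd1 : dd ≤ 1 := by rw [hdd, div_le_one h1b]; linarith
  have hddrr : dd = 1 - rr := by rw [hdd, hrr]; field_simp; ring
  -- basic facts about F
  have F0 : F (fun _ => (0:ℝ)) = 0 := by
    have h := Fsmul 0 (fun _ => (0:ℝ)); simpa using h
  have Fnonneg : ∀ v, 0 ≤ F v := by
    intro v
    have h1 : F (fun j => v j + (-1) * v j) ≤ F v + F (fun j => (-1) * v j) := Fadd _ _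
    have h2 : F (fun j => (-1) * v j) = F v := by rw [Fsmul]; simp
    have h3 : (fun j : ZMod N => v j + (-1) * v j) = (fun _ => (0:ℝ)) := by funext j; ring
    rw [h3, F0, h2] at h1; linarith
  have Fsm : ∀ (c : ℝ) (v : ZMod N → ℝ), 0 ≤ c → F (fun j => c * v j) = c * F v := by
    intro c v hc; rw [Fsmul, abs_of_nonneg hc]
  have Fshiftn : ∀ (n : ℕ) (v : ZMod N → ℝ), F (fun j => v (j - (n : ZMod N))) = F v := by
    intro n
    induction n with
    | zero => intro v; simpa using congrArg F (rfl : (fun j : ZMod N => v (j - ((0:ℕ):ZMod N))) = _)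
    | succ n ih =>
      intro v
      have e : (fun j : ZMod N => v (j - ((n + 1 : ℕ) : ZMod N)))
          = (fun j : ZMod N => (fun i => v (i - (n : ZMod N))) (j - 1)) := by
        funext j; simp only; congr 1; push_cast; ring
      rw [e, Fshift (fun i => v (i - (n : ZMod N))), ih]
  have Fimp : ∀ (β : ℝ), 0 ≤ β → ∀ (v g : ZMod N → ℝ),
      (∀ j, v j + β * (v j - v (j - 1)) = g j) → F v ≤ F g := by
    intro β hβ v g hvg
    have h1 : F (fun j => (1 + β) * v j) = (1 + β) * F v := Fsm _ _ (by linarith)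
    have h2 : (fun j : ZMod N => (1 + β) * v j) = (fun j => g j + β * v (j - 1)) := by
      funext j; linear_combination hvg j
    have h3 : F (fun j : ZMod N => g j + β * v (j - 1)) ≤ F g + F (fun j : ZMod N => β * v (j - 1)) :=
      Fadd _ _
    have h4 : F (fun j : ZMod N => β * v (j - 1)) = β * F v := by
      have := Fsm β (fun i : ZMod N => v (i - 1)) hβ
      rw [Fshift] at this; exact this
    rw [h2] at h1
    nlinarith [h1, h3, h4]
  -- stage 2
  have hw2 : F w2 ≤ F wn := by
    refine (Fimp b2 hb2 w2 (fun j => wn j - s * (wn j - wn (j - 1))) E2).trans ?_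
    have e : (fun j : ZMod N => wn j - s * (wn j - wn (j - 1)))
        = (fun j => (1 - s) * wn j + s * wn (j - 1)) := by funext j; ring
    rw [e]
    have h1 : F (fun j : ZMod N => (1 - s) * wn j + s * wn (j - 1)) ≤
        F (fun j : ZMod N => (1 - s) * wn j) + F (fun j : ZMod N => s * wn (j - 1)) := Fadd _ _
    have h2 : F (fun j : ZMod N => (1 - s) * wn j) = (1 - s) * F wn := Fsm _ _ (by linarith)
    have h3 : F (fun j : ZMod N => s * wn (j - 1)) = s * F wn := by
      have := Fsm s (fun i : ZMod N => wn (i - 1)) hs0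
      rw [Fshift] at this; exact this
    rw [h2, h3] at h1; linarith

  -- auxiliary sequence y and its implicit equation
  obtain ⟨y, hy⟩ : ∃ y : ZMod N → ℝ, ∀ j, y j = w3 j - x * (w3 j - w3 (j - 1)) :=
    ⟨_, fun _ => rfl⟩
  obtain ⟨u, hu⟩ : ∃ u : ZMod N → ℝ, ∀ j,
      u j = (A2 - c2) * w2 j + c2 * w2 (j - 1) + d3 * y j := ⟨_, fun _ => rfl⟩
  have Ey : ∀ j, y j + b3 * (y j - y (j - 1)) =
      (1 - x) ^ 2 * w2 j + (2 * x * (1 - x)) * w2 (j - 1) + x ^ 2 * w2 (j - 1 - 1) := by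
    intro j
    rw [hy j, hy (j - 1)]
    linear_combination (1 - x) * E3 j + x * E3 (j - 1)
  have hrec : ∀ j, y j = dd * ((1 - x) ^ 2 * w2 j + (2 * x * (1 - x)) * w2 (j - 1)
      + x ^ 2 * w2 (j - 1 - 1)) + rr * y (j - 1) := by
    intro j
    have h := Ey j
    rw [hdd, hrr]
    field_simp
    linear_combination h
  -- the expansion identity
  have U : ∀ (m : ℕ) (j : ZMod N), u j =
      ((A2 - c2) + d3 * dd * (1 - x) ^ 2) * w2 j
      + (c2 + d3 * dd * (rr * (1 - x) ^ 2 + 2 * x * (1 - x))) * w2 (j - 1)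
      + (∑ k ∈ Finset.range m, d3 * dd * (rr * (1 - x) + x) ^ 2 * rr ^ k * w2 (j - 2 - (k : ZMod N)))
      + d3 * dd * (2 * x * (1 - x) * rr ^ (m + 1) + x ^ 2 * rr ^ m) * w2 (j - 2 - (m : ZMod N))
      + d3 * dd * x ^ 2 * rr ^ (m + 1) * w2 (j - 3 - (m : ZMod N))
      + d3 * rr ^ (m + 2) * y (j - 2 - (m : ZMod N)) := by
    intro m
    induction m with
    | zero =>
      intro j
      simp only [Nat.cast_zero, sub_zero, Finset.range_zero, Finset.sum_empty]
      have i1 : j - 1 - 1 = j - 2 := by ring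
      have h1 := hrec j
      have h2 := hrec (j - 1)
      rw [i1] at h1 h2
      have i2 : j - 2 - 1 = j - 3 := by ring
      rw [i2] at h2
      rw [hu j, h1, h2]
      ring
    | succ m ih =>
      intro j
      have h1 := hrec (j - 2 - (m : ZMod N))
      have i1 : j - 2 - (m : ZMod N) - 1 = j - 3 - (m : ZMod N) := by ring
      rw [i1] at h1
      have i2 : j - 3 - (m : ZMod N) - 1 - 1 = j - 3 - (m : ZMod N) - 2 := by ring
      rw [Finset.sum_range_succ]
      push_cast
      have f1 : j - 2 - ((m : ZMod N) + 1) = j - 3 - (m : ZMod N) := by ring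
      have f2 : j - 3 - ((m : ZMod N) + 1) = j - 3 - (m : ZMod N) - 1 := by ring
      rw [f1, f2]
      have IH := ih j
      linear_combination IH + (d3 * rr ^ (m + 2)) * h1

  -- F of scaled shifts
  have Fsh1 : ∀ (c : ℝ) (v : ZMod N → ℝ), F (fun j => c * v (j - 1)) = |c| * F v := by
    intro c v
    have h := Fsmul c (fun i : ZMod N => v (i - 1))
    rw [Fshift] at h; exact h
  have Fsh2 : ∀ (mm : ℕ) (v : ZMod N → ℝ) (c : ℝ),
      F (fun j => c * v (j - 2 - (mm : ZMod N))) = |c| * F v := by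
    intro mm v c
    have e : (fun i : ZMod N => v (i - 2 - (mm : ZMod N)))
        = (fun i : ZMod N => v (i - ((mm + 2 : ℕ) : ZMod N))) := by
      funext i; congr 1; push_cast; ring
    have h := Fsmul c (fun i : ZMod N => v (i - 2 - (mm : ZMod N)))
    rw [e, Fshiftn] at h; exact h
  have Fsh3 : ∀ (mm : ℕ) (v : ZMod N → ℝ) (c : ℝ),
      F (fun j => c * v (j - 3 - (mm : ZMod N))) = |c| * F v := by
    intro mm v c
    have e : (fun i : ZMod N => v (i - 3 - (mm : ZMod N)))
        = (fun i : ZMod N => v (i - ((mm + 3 : ℕ) : ZMod N))) := by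
      funext i; congr 1; push_cast; ring
    have h := Fsmul c (fun i : ZMod N => v (i - 3 - (mm : ZMod N)))
    rw [e, Fshiftn] at h; exact h
  have Fadd6 : ∀ t1 t2 t3 t4 t5 t6 : ZMod N → ℝ,
      F (fun j => t1 j + t2 j + t3 j + t4 j + t5 j + t6 j) ≤
        F t1 + F t2 + F t3 + F t4 + F t5 + F t6 := by
    intro t1 t2 t3 t4 t5 t6
    have h5 : F (fun j => t1 j + t2 j + t3 j + t4 j + t5 j + t6 j) ≤
        F (fun j => t1 j + t2 j + t3 j + t4 j + t5 j) + F t6 := Fadd _ _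
    have h4 : F (fun j => t1 j + t2 j + t3 j + t4 j + t5 j) ≤
        F (fun j => t1 j + t2 j + t3 j + t4 j) + F t5 := Fadd _ _
    have h3 : F (fun j => t1 j + t2 j + t3 j + t4 j) ≤
        F (fun j => t1 j + t2 j + t3 j) + F t4 := Fadd _ _
    have h2 : F (fun j => t1 j + t2 j + t3 j) ≤ F (fun j => t1 j + t2 j) + F t3 := Fadd _ _
    have h1 : F (fun j => t1 j + t2 j) ≤ F t1 + F t2 := Fadd _ _
    linarith
  -- sum bound
  have Fsum : ∀ (m : ℕ),
      F (fun j => ∑ k ∈ Finset.range m,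
          d3 * dd * (rr * (1 - x) + x) ^ 2 * rr ^ k * w2 (j - 2 - (k : ZMod N))) ≤
        (∑ k ∈ Finset.range m, d3 * dd * (rr * (1 - x) + x) ^ 2 * rr ^ k) * F w2 := by
    intro m
    induction m with
    | zero =>
      simp only [Finset.range_zero, Finset.sum_empty, zero_mul]
      rw [F0]
    | succ m ih =>
      have e : (fun j : ZMod N => ∑ k ∈ Finset.range (m + 1),
            d3 * dd * (rr * (1 - x) + x) ^ 2 * rr ^ k * w2 (j - 2 - (k : ZMod N)))
          = (fun j : ZMod N => (∑ k ∈ Finset.range m,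
            d3 * dd * (rr * (1 - x) + x) ^ 2 * rr ^ k * w2 (j - 2 - (k : ZMod N)))
            + d3 * dd * (rr * (1 - x) + x) ^ 2 * rr ^ m * w2 (j - 2 - (m : ZMod N))) := by
        funext j; rw [Finset.sum_range_succ]
      rw [e, Finset.sum_range_succ]
      have h1 : F (fun j : ZMod N => (∑ k ∈ Finset.range m,
            d3 * dd * (rr * (1 - x) + x) ^ 2 * rr ^ k * w2 (j - 2 - (k : ZMod N)))
            + d3 * dd * (rr * (1 - x) + x) ^ 2 * rr ^ m * w2 (j - 2 - (m : ZMod N))) ≤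
          F (fun j : ZMod N => ∑ k ∈ Finset.range m,
            d3 * dd * (rr * (1 - x) + x) ^ 2 * rr ^ k * w2 (j - 2 - (k : ZMod N)))
          + F (fun j : ZMod N =>
            d3 * dd * (rr * (1 - x) + x) ^ 2 * rr ^ m * w2 (j - 2 - (m : ZMod N))) := Fadd _ _
      have h2 := Fsh2 m w2 (d3 * dd * (rr * (1 - x) + x) ^ 2 * rr ^ m)
      have hc : |d3 * dd * (rr * (1 - x) + x) ^ 2 * rr ^ m|
          = d3 * dd * (rr * (1 - x) + x) ^ 2 * rr ^ m := by
        apply abs_of_nonneg; positivity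
      rw [hc] at h2
      rw [h2] at h1
      nlinarith [h1, ih]
  -- nonnegativity of the two leading coefficients
  have he0 : 0 ≤ (A2 - c2) + d3 * dd * (1 - x) ^ 2 := by
    have h := mul_nonneg (mul_nonneg hd3 hd0.le) (sq_nonneg (1 - x))
    linarith
  have he1 : 0 ≤ c2 + d3 * dd * (rr * (1 - x) ^ 2 + 2 * x * (1 - x)) := by
    rcases le_total x 1 with h | h
    · have h1 : 0 ≤ d3 * dd * (rr * (1 - x) ^ 2) := by positivity
      have h2 : 0 ≤ d3 * dd * (2 * x * (1 - x)) :=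
        mul_nonneg (mul_nonneg hd3 hd0.le)
          (mul_nonneg (by linarith) (by linarith))
      linarith
    · have h1 : 0 ≤ d3 * dd * (rr * (1 - x) ^ 2) := by positivity
      have haux : 0 ≤ d3 * (2 * x) * ((x - 1) * (1 - dd)) :=
        mul_nonneg (mul_nonneg hd3 (by linarith))
          (mul_nonneg (by linarith) (by linarith))
      nlinarith [hkey]
  -- main mass bound
  have hA2 : 0 ≤ A2 := le_trans hc20 hc2A
  have hgs : ∀ m : ℕ, dd * ∑ k ∈ Finset.range m, rr ^ k ≤ 1 := by
    intro m
    have hrne : rr ≠ 1 := ne_of_lt hr1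
    rw [geom_sum_eq hrne]
    have hr1' : rr - 1 ≠ 0 := by intro h; apply hrne; linarith
    have hform : dd * ((rr ^ m - 1) / (rr - 1)) = 1 - rr ^ m := by
      rw [hddrr]; field_simp; ring
    rw [hform]
    have : 0 ≤ rr ^ m := pow_nonneg hr0 m
    linarith
  have hident3 : d3 * (dd * (1 - x) ^ 2) + d3 * (dd * (rr * (1 - x) ^ 2 + 2 * x * (1 - x)))
      + d3 * (rr * (1 - x) + x) ^ 2 = d3 := by rw [hddrr]; ring
  -- the F-bound for each truncation level m
  have hdd1 : (0:ℝ) ≤ 1 - dd := by linarith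
  have hFu : ∀ m : ℕ, F u ≤ (A2 + d3) * F w2
      + rr ^ m * (d3 * ((2 * x * (1 + x) + 2 * x ^ 2) * F w2 + F y)) := by
    intro m
    -- scalar preliminaries
    have hpm : 0 ≤ rr ^ m := pow_nonneg hr0 m
    have hpm1 : 0 ≤ rr ^ (m + 1) := pow_nonneg hr0 (m + 1)
    have hpow1 : rr ^ (m + 1) ≤ rr ^ m := by
      calc rr ^ (m + 1) = rr * rr ^ m := by ring
        _ ≤ 1 * rr ^ m := mul_le_mul_of_nonneg_right (le_of_lt hr1) hpm
        _ = rr ^ m := one_mul _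
    have hpow2 : rr ^ (m + 2) ≤ rr ^ m := by
      calc rr ^ (m + 2) = rr * rr ^ (m + 1) := by ring
        _ ≤ 1 * rr ^ (m + 1) := mul_le_mul_of_nonneg_right (le_of_lt hr1) hpm1
        _ = rr ^ (m + 1) := one_mul _
        _ ≤ rr ^ m := hpow1
    have hZ : |2 * x * (1 - x) * rr ^ (m + 1) + x ^ 2 * rr ^ m|
        ≤ (2 * x * (1 + x) + x ^ 2) * rr ^ m := by
      rw [abs_le]
      constructor
      · linarith only [mul_nonneg (sq_nonneg x) (sub_nonneg.mpr hpow1),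
          mul_nonneg hx0 hpm, mul_nonneg hx0 hpm1, mul_nonneg (sq_nonneg x) hpm,
          mul_nonneg (sq_nonneg x) hpm1]
      · linarith only [mul_nonneg hx0 (sub_nonneg.mpr hpow1),
          mul_nonneg (sq_nonneg x) hpm1, mul_nonneg hx0 hpm,
          mul_nonneg (sq_nonneg x) hpm]
    have hddnn : (0:ℝ) ≤ d3 * dd := mul_nonneg hd3 hd0.le
    have hW : (0:ℝ) ≤ (2 * x * (1 + x) + x ^ 2) * rr ^ m := by positivity
    have habs : |d3 * dd * (2 * x * (1 - x) * rr ^ (m + 1) + x ^ 2 * rr ^ m)|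
        ≤ d3 * (2 * x * (1 + x) + x ^ 2) * rr ^ m := by
      calc |d3 * dd * (2 * x * (1 - x) * rr ^ (m + 1) + x ^ 2 * rr ^ m)|
          = d3 * dd * |2 * x * (1 - x) * rr ^ (m + 1) + x ^ 2 * rr ^ m| := by
            rw [abs_mul, abs_of_nonneg hddnn]
        _ ≤ d3 * dd * ((2 * x * (1 + x) + x ^ 2) * rr ^ m) :=
            mul_le_mul_of_nonneg_left hZ hddnn
        _ ≤ d3 * (2 * x * (1 + x) + x ^ 2) * rr ^ m := by
            linarith only [mul_nonneg (mul_nonneg hd3 hdd1) hW]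
    have hSsum_eq : (∑ k ∈ Finset.range m, d3 * dd * (rr * (1 - x) + x) ^ 2 * rr ^ k)
        = d3 * (rr * (1 - x) + x) ^ 2 * (dd * (∑ k ∈ Finset.range m, rr ^ k)) := by
      rw [Finset.mul_sum, Finset.mul_sum]
      exact Finset.sum_congr rfl (fun k _ => by ring)
    have hSs : (∑ k ∈ Finset.range m, d3 * dd * (rr * (1 - x) + x) ^ 2 * rr ^ k)
        ≤ d3 * (rr * (1 - x) + x) ^ 2 := by
      rw [hSsum_eq]
      calc d3 * (rr * (1 - x) + x) ^ 2 * (dd * ∑ k ∈ Finset.range m, rr ^ k)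
          ≤ d3 * (rr * (1 - x) + x) ^ 2 * 1 :=
            mul_le_mul_of_nonneg_left (hgs m) (by positivity)
        _ = d3 * (rr * (1 - x) + x) ^ 2 := mul_one _
    have hmass : ((A2 - c2) + d3 * dd * (1 - x) ^ 2)
        + (c2 + d3 * dd * (rr * (1 - x) ^ 2 + 2 * x * (1 - x)))
        + (∑ k ∈ Finset.range m, d3 * dd * (rr * (1 - x) + x) ^ 2 * rr ^ k) ≤ A2 + d3 := by
      linarith only [hSs, hident3]
    have ht5 : d3 * dd * x ^ 2 * rr ^ (m + 1) ≤ d3 * x ^ 2 * rr ^ m := by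
      linarith only [mul_nonneg (mul_nonneg (mul_nonneg hd3 hdd1) (sq_nonneg x)) hpm1,
        mul_nonneg (mul_nonneg hd3 (sq_nonneg x)) (sub_nonneg.mpr hpow1)]
    have ht6 : d3 * rr ^ (m + 2) ≤ d3 * rr ^ m := mul_le_mul_of_nonneg_left hpow2 hd3
    have hFw2 := Fnonneg w2
    have hFy := Fnonneg y
    have q1 : (((A2 - c2) + d3 * dd * (1 - x) ^ 2)
        + (c2 + d3 * dd * (rr * (1 - x) ^ 2 + 2 * x * (1 - x)))
        + (∑ k ∈ Finset.range m, d3 * dd * (rr * (1 - x) + x) ^ 2 * rr ^ k)) * F w2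
        ≤ (A2 + d3) * F w2 := mul_le_mul_of_nonneg_right hmass hFw2
    have q2 : |d3 * dd * (2 * x * (1 - x) * rr ^ (m + 1) + x ^ 2 * rr ^ m)| * F w2
        ≤ (d3 * (2 * x * (1 + x) + x ^ 2) * rr ^ m) * F w2 :=
      mul_le_mul_of_nonneg_right habs hFw2
    have q3 : (d3 * dd * x ^ 2 * rr ^ (m + 1)) * F w2 ≤ (d3 * x ^ 2 * rr ^ m) * F w2 :=
      mul_le_mul_of_nonneg_right ht5 hFw2
    have q4 : (d3 * rr ^ (m + 2)) * F y ≤ (d3 * rr ^ m) * F y :=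
      mul_le_mul_of_nonneg_right ht6 hFy
    -- the splitting of F u
    have hstart : F u ≤
        F (fun j : ZMod N => ((A2 - c2) + d3 * dd * (1 - x) ^ 2) * w2 j)
        + F (fun j : ZMod N => (c2 + d3 * dd * (rr * (1 - x) ^ 2 + 2 * x * (1 - x))) * w2 (j - 1))
        + F (fun j : ZMod N => ∑ k ∈ Finset.range m,
            d3 * dd * (rr * (1 - x) + x) ^ 2 * rr ^ k * w2 (j - 2 - (k : ZMod N)))
        + F (fun j : ZMod N =>
            d3 * dd * (2 * x * (1 - x) * rr ^ (m + 1) + x ^ 2 * rr ^ m) * w2 (j - 2 - (m : ZMod N)))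
        + F (fun j : ZMod N => d3 * dd * x ^ 2 * rr ^ (m + 1) * w2 (j - 3 - (m : ZMod N)))
        + F (fun j : ZMod N => d3 * rr ^ (m + 2) * y (j - 2 - (m : ZMod N))) := by
      refine le_trans (le_of_eq (congrArg F (funext (U m)))) ?_
      exact Fadd6 _ _ _ _ _ _
    have hT1 : F (fun j : ZMod N => ((A2 - c2) + d3 * dd * (1 - x) ^ 2) * w2 j)
        = ((A2 - c2) + d3 * dd * (1 - x) ^ 2) * F w2 := Fsm _ _ he0
    have hT2 : F (fun j : ZMod N =>
        (c2 + d3 * dd * (rr * (1 - x) ^ 2 + 2 * x * (1 - x))) * w2 (j - 1))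
        = (c2 + d3 * dd * (rr * (1 - x) ^ 2 + 2 * x * (1 - x))) * F w2 := by
      rw [Fsh1, abs_of_nonneg he1]
    have hT3 := Fsum m
    have hT4 : F (fun j : ZMod N =>
        d3 * dd * (2 * x * (1 - x) * rr ^ (m + 1) + x ^ 2 * rr ^ m) * w2 (j - 2 - (m : ZMod N)))
        = |d3 * dd * (2 * x * (1 - x) * rr ^ (m + 1) + x ^ 2 * rr ^ m)| * F w2 := Fsh2 _ _ _
    have hT5 : F (fun j : ZMod N => d3 * dd * x ^ 2 * rr ^ (m + 1) * w2 (j - 3 - (m : ZMod N)))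
        = (d3 * dd * x ^ 2 * rr ^ (m + 1)) * F w2 := by
      rw [Fsh3, abs_of_nonneg (by positivity)]
    have hT6 : F (fun j : ZMod N => d3 * rr ^ (m + 2) * y (j - 2 - (m : ZMod N)))
        = (d3 * rr ^ (m + 2)) * F y := by
      rw [Fsh2, abs_of_nonneg (by positivity)]
    rw [hT1, hT2, hT4, hT5, hT6] at hstart
    linarith only [hstart, hT3, q1, q2, q3, q4]
  -- pass to the limit m → ∞
  have hFu' : F u ≤ (A2 + d3) * F w2 := by
    have htend : Tendsto (fun m : ℕ => (A2 + d3) * F w2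
        + rr ^ m * (d3 * ((2 * x * (1 + x) + 2 * x ^ 2) * F w2 + F y))) atTop
        (nhds ((A2 + d3) * F w2)) := by
      have h0 : Tendsto (fun m : ℕ => rr ^ m) atTop (nhds 0) :=
        tendsto_pow_atTop_nhds_zero_of_lt_one hr0 hr1
      have h1 := (h0.mul_const (d3 * ((2 * x * (1 + x) + 2 * x ^ 2) * F w2 + F y))).const_add
        ((A2 + d3) * F w2)
      simpa using h1
    exact ge_of_tendsto htend (Filter.Eventually.of_forall hFu)
  -- final assembly
  have E4' : ∀ j, wnext j + b4 * (wnext j - wnext (j - 1)) =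
      (fun j => (A0 - cn) * wn j + cn * wn (j - 1) + u j) j := by
    intro j
    simp only
    rw [hu j, hy j]
    linear_combination E4 j
  have hnext := Fimp b4 hb4 wnext _ E4'
  have hsplit : F (fun j : ZMod N => (A0 - cn) * wn j + cn * wn (j - 1) + u j) ≤
      F (fun j : ZMod N => (A0 - cn) * wn j) + F (fun j : ZMod N => cn * wn (j - 1)) + F u := by
    have h1 : F (fun j : ZMod N => (A0 - cn) * wn j + cn * wn (j - 1) + u j) ≤
        F (fun j : ZMod N => (A0 - cn) * wn j + cn * wn (j - 1)) + F u := Fadd _ _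
    have h2 : F (fun j : ZMod N => (A0 - cn) * wn j + cn * wn (j - 1)) ≤
        F (fun j : ZMod N => (A0 - cn) * wn j) + F (fun j : ZMod N => cn * wn (j - 1)) := Fadd _ _
    linarith
  have hP1 : F (fun j : ZMod N => (A0 - cn) * wn j) = (A0 - cn) * F wn :=
    Fsm _ _ (by linarith)
  have hP2 : F (fun j : ZMod N => cn * wn (j - 1)) = cn * F wn := by
    rw [Fsh1, abs_of_nonneg hcn0]
  rw [hP1, hP2] at hsplit
  have hFwn := Fnonneg wn
  nlinarith [hnext, hsplit, hFu', hw2, hFwn, hA2, hd3,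
    mul_le_mul_of_nonneg_left hw2 (by linarith : (0:ℝ) ≤ A2 + d3)]

/-- Lemma 3.1: L∞ stability and TVD property of the TVD3 scheme built from the
γ-family of third-order IMEX Butcher tableaux by convex combination with the
first-order IMEX Euler scheme. -/
theorem TVD3_Linf_stable_and_TVD {N : ℕ} [NeZero N] (γ θ₃ θ₄ mu lam : ℝ)
    (hγ : Real.sqrt 3 / 3 ≤ γ)
    (hθ₃ : θ₃ = (3 * γ - 1) / (6 * γ ^ 2))
    (hθ₄0 : 0 ≤ θ₄) (hθ₄ : θ₄ < (3 * γ - 1) * (3 * γ ^ 2 + 1) / (18 * γ ^ 3))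
    (hmu : 0 ≤ mu) (hlam0 : 0 ≤ lam)
    (hlam : lam ≤ (18 * γ ^ 3 * θ₄ - (3 * γ - 1) * (3 * γ ^ 2 + 1)) /
        ((3 * γ - 1) * ((6 * γ ^ 2 + 1) * θ₄ - (3 * γ ^ 2 + 1))))
    (wn w2 w3 wnext : ZMod N → ℝ)
    (h2 : ∀ j : ZMod N,
      w2 j + ((3 * γ - 1) / (6 * γ)) * mu * (w2 j - w2 (j - 1)) =
        wn j - lam * ((3 * γ - 1) / (6 * γ)) * (wn j - wn (j - 1)))
    (h3 : ∀ j : ZMod N,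
      w3 j + (1 - θ₃) * ((γ + 1) / 2) * mu * (w3 j - w3 (j - 1)) =
        wn j
        - lam * ((1 - θ₃) * ((γ + 1) / 2) * (wn j - wn (j - 1))
            + θ₃ * ((-(6 * γ ^ 3 - 3 * γ ^ 2 + 1) / (2 * (3 * γ - 1))) * (wn j - wn (j - 1))
              + (γ * (3 * γ ^ 2 + 1) / (3 * γ - 1)) * (w2 j - w2 (j - 1))))
        - mu * θ₃ * (γ * (w2 j - w2 (j - 1)) + ((1 - γ) / 2) * (w3 j - w3 (j - 1))))
    (h4 : ∀ j : ZMod N,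
      wnext j + (1 - θ₄) * mu * (wnext j - wnext (j - 1)) =
        wn j
        - θ₄ * (lam + mu) * ((3 * γ ^ 2 / (3 * γ ^ 2 + 1)) * (w2 j - w2 (j - 1))
            + (1 / (3 * γ ^ 2 + 1)) * (w3 j - w3 (j - 1)))
        - (1 - θ₄) * lam * (wn j - wn (j - 1))) :
    Finset.univ.sup' Finset.univ_nonempty (fun j : ZMod N => |wnext j|) ≤
      Finset.univ.sup' Finset.univ_nonempty (fun j : ZMod N => |wn j|) ∧
    (∑ j : ZMod N, |wnext (j + 1) - wnext j|) ≤ ∑ j : ZMod N, |wn (j + 1) - wn j| := by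
  -- basic facts about γ
  have hs3 : Real.sqrt 3 ^ 2 = 3 := Real.sq_sqrt (by norm_num)
  have hs3n : (0:ℝ) ≤ Real.sqrt 3 := Real.sqrt_nonneg 3
  have hsgt : (1.7:ℝ) < Real.sqrt 3 := by nlinarith [hs3, hs3n]
  have hγ56 : (0.56:ℝ) < γ := by
    have : (1.7:ℝ)/3 < Real.sqrt 3 / 3 := by linarith
    have h056 : (0.56:ℝ) < 1.7/3 := by norm_num
    linarith
  have hγ0 : (0:ℝ) < γ := by linarith
  have hP : (0:ℝ) < 3 * γ - 1 := by linarith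
  have hQ : (0:ℝ) < 3 * γ ^ 2 + 1 := by positivity
  have hR : (1:ℝ) ≤ 3 * γ ^ 2 := by
    nlinarith [sq_nonneg (γ - Real.sqrt 3 / 3), mul_nonneg hs3n (sub_nonneg.mpr hγ), hs3]
  have h18 : (0:ℝ) < 18 * γ ^ 3 := by positivity
  have hθp : θ₄ * (18 * γ ^ 3) < (3 * γ - 1) * (3 * γ ^ 2 + 1) := (lt_div_iff₀ h18).mp hθ₄
  have hθ1 : θ₄ < 1 := by
    nlinarith [hθp, hθ₄0, h18, mul_nonneg hγ0.le (by linarith : (0:ℝ) ≤ 3 * γ ^ 2 - 1)]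
  have h6' : (0:ℝ) ≤ 6 * γ ^ 2 - 3 * γ + 1 := by linarith only [sq_nonneg (4 * γ - 1)]
  have hden : (6 * γ ^ 2 + 1) * θ₄ < 3 * γ ^ 2 + 1 := by
    have h6 : (6 * γ ^ 2 + 1) * (3 * γ - 1) < 18 * γ ^ 3 := by linarith only [sq_nonneg (4 * γ - 1)]
    nlinarith [mul_lt_mul_of_pos_left hθp (show (0:ℝ) < 6 * γ ^ 2 + 1 by positivity),
      mul_lt_mul_of_pos_right h6 hQ, h18, hθ₄0]
  have hDneg : (3 * γ - 1) * ((6 * γ ^ 2 + 1) * θ₄ - (3 * γ ^ 2 + 1)) < 0 :=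
    mul_neg_of_pos_of_neg hP (by linarith)
  have hlam' : 18 * γ ^ 3 * θ₄ - (3 * γ - 1) * (3 * γ ^ 2 + 1) ≤
      lam * ((3 * γ - 1) * ((6 * γ ^ 2 + 1) * θ₄ - (3 * γ ^ 2 + 1))) :=
    (le_div_iff_of_neg hDneg).mp hlam
  have L1 : lam ≤ 1 := by
    have hX : 0 < (3 * γ - 1) * ((3 * γ ^ 2 + 1) - (6 * γ ^ 2 + 1) * θ₄) :=
      mul_pos hP (by linarith)
    nlinarith [hlam', hX, mul_nonneg hθ₄0 h6']
  have hγne : γ ≠ 0 := ne_of_gt hγ0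
  have hPne : 3 * γ - 1 ≠ 0 := ne_of_gt hP
  have hQne : 3 * γ ^ 2 + 1 ≠ 0 := ne_of_gt hQ
  -- cleaned stage-3 equation
  have E3' : ∀ j : ZMod N,
      w3 j + (3 * γ ^ 2 + 1) / (6 * γ) * mu * (w3 j - w3 (j - 1)) =
        w2 j - lam * ((3 * γ ^ 2 + 1) / (6 * γ)) * (w2 j - w2 (j - 1)) := by
    intro j
    have a := h3 j
    have b := h2 j
    rw [hθ₃] at a
    linear_combination (norm := (field_simp; ring1)) a - b
  -- cleaned final-stage equation
  have E4' : ∀ j : ZMod N,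
      wnext j + (1 - θ₄) * mu * (wnext j - wnext (j - 1)) =
        ((1 - θ₄ * (18 * γ ^ 3 / ((3 * γ - 1) * (3 * γ ^ 2 + 1))))
            - lam * (1 - θ₄ * (6 * γ ^ 2 + 1) / (3 * γ ^ 2 + 1))) * wn j
        + (lam * (1 - θ₄ * (6 * γ ^ 2 + 1) / (3 * γ ^ 2 + 1))) * wn (j - 1)
        + ((θ₄ * (18 * γ ^ 3 / ((3 * γ - 1) * (3 * γ ^ 2 + 1)) - 6 * γ / (3 * γ ^ 2 + 1) ^ 2))
            - lam * θ₄ * (3 * γ ^ 2 - 1) / (3 * γ ^ 2 + 1)) * w2 j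
        + (lam * θ₄ * (3 * γ ^ 2 - 1) / (3 * γ ^ 2 + 1)) * w2 (j - 1)
        + (θ₄ * (6 * γ / (3 * γ ^ 2 + 1) ^ 2)) * (w3 j
            - lam * ((3 * γ ^ 2 + 1) / (6 * γ)) * (w3 j - w3 (j - 1))) := by
    intro j
    linear_combination (norm := (field_simp; ring1)) h4 j
      - (θ₄ * (18 * γ ^ 3 / ((3 * γ - 1) * (3 * γ ^ 2 + 1)))) * h2 j
      - (θ₄ * (6 * γ / (3 * γ ^ 2 + 1) ^ 2)) * E3' j
  -- scalar hypotheses for the master lemma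
  have hb2 : 0 ≤ (3 * γ - 1) / (6 * γ) * mu :=
    mul_nonneg (div_nonneg (by linarith) (by linarith)) hmu
  have hb3 : 0 ≤ (3 * γ ^ 2 + 1) / (6 * γ) * mu :=
    mul_nonneg (div_nonneg (by linarith) (by linarith)) hmu
  have hb4 : 0 ≤ (1 - θ₄) * mu := mul_nonneg (by linarith) hmu
  have hs0 : 0 ≤ lam * ((3 * γ - 1) / (6 * γ)) :=
    mul_nonneg hlam0 (div_nonneg (by linarith) (by linarith))
  have hs1 : lam * ((3 * γ - 1) / (6 * γ)) ≤ 1 := by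
    have hq : (3 * γ - 1) / (6 * γ) ≤ 1 := by
      rw [div_le_one (by linarith)]; linarith
    have h1 : 0 ≤ (1 - lam) * ((3 * γ - 1) / (6 * γ)) :=
      mul_nonneg (by linarith) (div_nonneg (by linarith) (by linarith))
    linarith only [hq, h1]
  have hx0 : 0 ≤ lam * ((3 * γ ^ 2 + 1) / (6 * γ)) :=
    mul_nonneg hlam0 (div_nonneg (by linarith) (by linarith))
  have hcn0 : 0 ≤ lam * (1 - θ₄ * (6 * γ ^ 2 + 1) / (3 * γ ^ 2 + 1)) := by
    apply mul_nonneg hlam0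
    rw [sub_nonneg, div_le_one hQ]
    nlinarith [hden, hθ₄0]
  have hcnA : lam * (1 - θ₄ * (6 * γ ^ 2 + 1) / (3 * γ ^ 2 + 1)) ≤
      1 - θ₄ * (18 * γ ^ 3 / ((3 * γ - 1) * (3 * γ ^ 2 + 1))) := by
    have heqA : (1 - θ₄ * (18 * γ ^ 3 / ((3 * γ - 1) * (3 * γ ^ 2 + 1))))
        - lam * (1 - θ₄ * (6 * γ ^ 2 + 1) / (3 * γ ^ 2 + 1))
        = (((3 * γ - 1) * (3 * γ ^ 2 + 1) - 18 * γ ^ 3 * θ₄)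
            - lam * ((3 * γ - 1) * ((3 * γ ^ 2 + 1) - (6 * γ ^ 2 + 1) * θ₄)))
          / ((3 * γ - 1) * (3 * γ ^ 2 + 1)) := by
      generalize 3 * γ - 1 = P at hPne ⊢
      field_simp
    have hnum : 0 ≤ ((3 * γ - 1) * (3 * γ ^ 2 + 1) - 18 * γ ^ 3 * θ₄)
        - lam * ((3 * γ - 1) * ((3 * γ ^ 2 + 1) - (6 * γ ^ 2 + 1) * θ₄)) := by
      nlinarith [hlam']
    have h0 : 0 ≤ (1 - θ₄ * (18 * γ ^ 3 / ((3 * γ - 1) * (3 * γ ^ 2 + 1))))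
        - lam * (1 - θ₄ * (6 * γ ^ 2 + 1) / (3 * γ ^ 2 + 1)) := by
      rw [heqA]
      exact div_nonneg hnum (by positivity)
    linarith
  have hc20 : 0 ≤ lam * θ₄ * (3 * γ ^ 2 - 1) / (3 * γ ^ 2 + 1) :=
    div_nonneg (mul_nonneg (mul_nonneg hlam0 hθ₄0) (by linarith)) hQ.le
  have hc2A : lam * θ₄ * (3 * γ ^ 2 - 1) / (3 * γ ^ 2 + 1) ≤
      θ₄ * (18 * γ ^ 3 / ((3 * γ - 1) * (3 * γ ^ 2 + 1)) - 6 * γ / (3 * γ ^ 2 + 1) ^ 2) := by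
    have heqB : θ₄ * (18 * γ ^ 3 / ((3 * γ - 1) * (3 * γ ^ 2 + 1)) - 6 * γ / (3 * γ ^ 2 + 1) ^ 2)
        - lam * θ₄ * (3 * γ ^ 2 - 1) / (3 * γ ^ 2 + 1)
        = θ₄ * ((18 * γ ^ 3 * (3 * γ ^ 2 + 1) - 6 * γ * (3 * γ - 1))
            - lam * ((3 * γ ^ 2 - 1) * ((3 * γ - 1) * (3 * γ ^ 2 + 1))))
          / ((3 * γ - 1) * (3 * γ ^ 2 + 1) ^ 2) := by
      generalize 3 * γ - 1 = P at hPne ⊢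
      field_simp
    have hM : 0 ≤ (3 * γ ^ 2 - 1) * ((3 * γ - 1) * (3 * γ ^ 2 + 1)) :=
      mul_nonneg (by linarith) (mul_nonneg (by linarith) hQ.le)
    have hlamM : lam * ((3 * γ ^ 2 - 1) * ((3 * γ - 1) * (3 * γ ^ 2 + 1)))
        ≤ (3 * γ ^ 2 - 1) * ((3 * γ - 1) * (3 * γ ^ 2 + 1)) := by
      nlinarith [mul_nonneg (sub_nonneg.mpr L1) hM]
    have hpoly5 : 0 ≤ 18 * γ ^ 3 * (3 * γ ^ 2 + 1) - 6 * γ * (3 * γ - 1)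
        - (3 * γ ^ 2 - 1) * ((3 * γ - 1) * (3 * γ ^ 2 + 1)) := by
      have e1 : 0 ≤ 9 * γ ^ 3 * (3 * γ ^ 2 - 1) := mul_nonneg (by positivity) (by linarith)
      have e2 : 0 ≤ 3 * γ ^ 2 * (3 * γ ^ 2 - 1) := mul_nonneg (by positivity) (by linarith)
      have e3 : 0 ≤ 3 * γ ^ 2 * (9 * γ - 5) := mul_nonneg (by positivity) (by linarith)
      have e4 : (0:ℝ) ≤ 9 * γ - 1 := by linarith
      linarith only [e1, e2, e3, e4]
    have hnum : 0 ≤ (18 * γ ^ 3 * (3 * γ ^ 2 + 1) - 6 * γ * (3 * γ - 1))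
        - lam * ((3 * γ ^ 2 - 1) * ((3 * γ - 1) * (3 * γ ^ 2 + 1))) := by
      linarith only [hpoly5, hlamM]
    have h0 : 0 ≤ θ₄ * (18 * γ ^ 3 / ((3 * γ - 1) * (3 * γ ^ 2 + 1)) - 6 * γ / (3 * γ ^ 2 + 1) ^ 2)
        - lam * θ₄ * (3 * γ ^ 2 - 1) / (3 * γ ^ 2 + 1) := by
      rw [heqB]
      exact div_nonneg (mul_nonneg hθ₄0 hnum) (by positivity)
    linarith
  have hd3 : 0 ≤ θ₄ * (6 * γ / (3 * γ ^ 2 + 1) ^ 2) := mul_nonneg hθ₄0 (by positivity)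
  have hbud : (1 - θ₄ * (18 * γ ^ 3 / ((3 * γ - 1) * (3 * γ ^ 2 + 1))))
      + θ₄ * (18 * γ ^ 3 / ((3 * γ - 1) * (3 * γ ^ 2 + 1)) - 6 * γ / (3 * γ ^ 2 + 1) ^ 2)
      + θ₄ * (6 * γ / (3 * γ ^ 2 + 1) ^ 2) ≤ 1 := le_of_eq (by ring)
  have hkey : 0 ≤ lam * θ₄ * (3 * γ ^ 2 - 1) / (3 * γ ^ 2 + 1)
      + 2 * (θ₄ * (6 * γ / (3 * γ ^ 2 + 1) ^ 2)) * (lam * ((3 * γ ^ 2 + 1) / (6 * γ)))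
        * (1 - lam * ((3 * γ ^ 2 + 1) / (6 * γ))) := by
    have heqK : lam * θ₄ * (3 * γ ^ 2 - 1) / (3 * γ ^ 2 + 1)
        + 2 * (θ₄ * (6 * γ / (3 * γ ^ 2 + 1) ^ 2)) * (lam * ((3 * γ ^ 2 + 1) / (6 * γ)))
          * (1 - lam * ((3 * γ ^ 2 + 1) / (6 * γ)))
        = lam * θ₄ * (3 * γ - lam) / (3 * γ) := by
      field_simp
      ring
    rw [heqK]
    exact div_nonneg (mul_nonneg (mul_nonneg hlam0 hθ₄0) (by linarith)) (by linarith)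
  -- the common abstract argument
  have main : ∀ (F : (ZMod N → ℝ) → ℝ),
      (∀ a b : ZMod N → ℝ, F (fun j => a j + b j) ≤ F a + F b) →
      (∀ (c : ℝ) (v : ZMod N → ℝ), F (fun j => c * v j) = |c| * F v) →
      (∀ v : ZMod N → ℝ, F (fun j => v (j - 1)) = F v) →
      F wnext ≤ F wn := by
    intro F Fa Fs Fsh
    exact tvd3_master F Fa Fs Fsh
      ((3 * γ - 1) / (6 * γ) * mu) ((3 * γ ^ 2 + 1) / (6 * γ) * mu) ((1 - θ₄) * mu)
      (lam * ((3 * γ - 1) / (6 * γ))) (lam * ((3 * γ ^ 2 + 1) / (6 * γ)))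
      (lam * (1 - θ₄ * (6 * γ ^ 2 + 1) / (3 * γ ^ 2 + 1)))
      (lam * θ₄ * (3 * γ ^ 2 - 1) / (3 * γ ^ 2 + 1))
      (1 - θ₄ * (18 * γ ^ 3 / ((3 * γ - 1) * (3 * γ ^ 2 + 1))))
      (θ₄ * (18 * γ ^ 3 / ((3 * γ - 1) * (3 * γ ^ 2 + 1)) - 6 * γ / (3 * γ ^ 2 + 1) ^ 2))
      (θ₄ * (6 * γ / (3 * γ ^ 2 + 1) ^ 2))
      hb2 hb3 hb4 hs0 hs1 hx0 hcn0 hcnA hc20 hc2A hd3 hbud hkey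
      wn w2 w3 wnext h2 E3' E4'
  constructor
  · -- sup norm
    refine main (fun v => Finset.univ.sup' Finset.univ_nonempty (fun j : ZMod N => |v j|))
      ?_ ?_ ?_
    · intro a b
      apply Finset.sup'_le
      intro j _
      calc |a j + b j| ≤ |a j| + |b j| := abs_add_le _ _
        _ ≤ _ + _ := add_le_add (Finset.le_sup' (fun i : ZMod N => |a i|) (Finset.mem_univ j))
            (Finset.le_sup' (fun i : ZMod N => |b i|) (Finset.mem_univ j))
    · intro c v
      apply le_antisymm
      · apply Finset.sup'_le
        intro j _
        rw [abs_mul]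
        exact mul_le_mul_of_nonneg_left
          (Finset.le_sup' (fun i : ZMod N => |v i|) (Finset.mem_univ j)) (abs_nonneg c)
      · obtain ⟨j0, -, hj0⟩ :=
          Finset.exists_mem_eq_sup' (Finset.univ_nonempty (α := ZMod N)) (fun j : ZMod N => |v j|)
        beta_reduce
        rw [hj0, ← abs_mul]
        exact Finset.le_sup' (fun i : ZMod N => |c * v i|) (Finset.mem_univ j0)
    · intro v
      apply le_antisymm
      · apply Finset.sup'_le
        intro j _
        exact Finset.le_sup' (fun i : ZMod N => |v i|) (Finset.mem_univ (j - 1))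
      · apply Finset.sup'_le
        intro j _
        have h := Finset.le_sup' (fun i : ZMod N => |v (i - 1)|) (Finset.mem_univ (j + 1))
        simp only [add_sub_cancel_right] at h; exact h
  · -- total variation
    refine main (fun v => ∑ j : ZMod N, |v (j + 1) - v j|) ?_ ?_ ?_
    · intro a b
      show (∑ j : ZMod N, |a (j + 1) + b (j + 1) - (a j + b j)|) ≤
        (∑ j : ZMod N, |a (j + 1) - a j|) + ∑ j : ZMod N, |b (j + 1) - b j|
      calc (∑ j : ZMod N, |a (j + 1) + b (j + 1) - (a j + b j)|)
          ≤ ∑ j : ZMod N, (|a (j + 1) - a j| + |b (j + 1) - b j|) := by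
            apply Finset.sum_le_sum
            intro j _
            have e : a (j + 1) + b (j + 1) - (a j + b j)
                = (a (j + 1) - a j) + (b (j + 1) - b j) := by ring
            rw [e]
            exact abs_add_le _ _
        _ = (∑ j : ZMod N, |a (j + 1) - a j|) + ∑ j : ZMod N, |b (j + 1) - b j| :=
            Finset.sum_add_distrib
    · intro c v
      show (∑ j : ZMod N, |c * v (j + 1) - c * v j|) = |c| * ∑ j : ZMod N, |v (j + 1) - v j|
      calc (∑ j : ZMod N, |c * v (j + 1) - c * v j|)
          = ∑ j : ZMod N, |c| * |v (j + 1) - v j| := by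
            apply Finset.sum_congr rfl
            intro j _
            rw [show c * v (j + 1) - c * v j = c * (v (j + 1) - v j) from by ring, abs_mul]
        _ = |c| * ∑ j : ZMod N, |v (j + 1) - v j| := (Finset.mul_sum _ _ _).symm
    · intro v
      show (∑ j : ZMod N, |v (j + 1 - 1) - v (j - 1)|) = ∑ j : ZMod N, |v (j + 1) - v j|
      have e1 : ∀ j : ZMod N, j + 1 - 1 = j := fun j => by ring
      simp only [e1]
      have h := Equiv.sum_comp (Equiv.addRight (1 : ZMod N)) (fun j : ZMod N => |v j - v (j - 1)|)
      simp only [Equiv.coe_addRight] at h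
      simp only [e1] at h
      exact h.symm
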